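/- For every ε > 0 and every integer n ≥ 1 there exists a polynomial P of degree N := mn (where m is the even integer with 1/ε < m ≤ 1/ε + 2) having all its zeros on the unit circle such that ‖P'‖_{[-1,1]} ≤ (1/ε + 2)^{1-ε} · N^ε · ‖P‖_{[-1,1]}. -/

import Mathlib

open Polynomial Set

/-- Core inequality: for `s ∈ [0,1]`, `n ≥ 1`, `m ≥ 2`:
`n * s^(m-1) * (1-s^m)^(n-1) ≤ n^(1/m)`. -/
lemma aux_core (m n : ℕ) (hm : 2 ≤ m) (hn : 1 ≤ n) (s : ℝ) (hs0 : 0 ≤ s) (hs1 : s ≤ 1) :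
    (n:ℝ) * s^(m-1) * (1 - s^m)^(n-1) ≤ (n:ℝ) ^ ((1:ℝ)/m) := by
  have hm0 : (0:ℝ) < m := by positivity
  have hn0 : (0:ℝ) < n := by exact_mod_cast hn
  rcases eq_or_lt_of_le hn with h1 | h2
  · -- n = 1
    rw [← h1]
    simp only [Nat.cast_one, one_mul, Nat.sub_self, pow_zero, mul_one, Real.one_rpow]
    exact pow_le_one₀ hs0 hs1
  · -- 2 ≤ n
    have hn2 : 2 ≤ n := h2
    set u : ℝ := s^m with hu
    have hu0 : 0 ≤ u := by positivity
    have hu1 : u ≤ 1 := pow_le_one₀ hs0 hs1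
    have hsm1 : 0 ≤ 1 - u := by linarith
    -- key: LHS^m ≤ n
    have key : ((n:ℝ) * s^(m-1) * (1 - u)^(n-1))^m ≤ (n:ℝ) := by
      have hexpand : ((n:ℝ) * s^(m-1) * (1 - u)^(n-1))^m
          = (n:ℝ)^m * u^(m-1) * ((1-u)^(n-1))^m := by
        rw [mul_pow, mul_pow, ← pow_mul s, ← pow_mul s]
        ring_nf
      rw [hexpand]
      by_cases hc : (n:ℝ) * u ≤ 1
      · have hun : u ≤ 1/(n:ℝ) := by rw [le_div_iff₀ hn0]; linarith [hc]
        have hone : ((1-u)^(n-1))^m ≤ 1 := by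
          apply pow_le_one₀ (by positivity)
          exact pow_le_one₀ hsm1 (by linarith)
        calc (n:ℝ)^m * u^(m-1) * ((1-u)^(n-1))^m
            ≤ (n:ℝ)^m * (1/(n:ℝ))^(m-1) * 1 := by
              gcongr
          _ = (n:ℝ) := by
              rw [mul_one, show m = (m-1)+1 by omega, pow_succ]
              field_simp
              rw [Nat.add_sub_cancel, ← mul_pow, mul_one_div_cancel hn0.ne', one_pow]
      · push_neg at hc
        have hu0' : 0 < u := by nlinarith
        rcases eq_or_lt_of_le hu1 with he | hul
        · -- u = 1
          rw [he]
          simp only [sub_self]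
          rw [zero_pow (by omega : n - 1 ≠ 0)]
          simp [zero_pow (by omega : m ≠ 0)]
        · have h1u : 0 < 1 - u := by linarith
          have hnu : 0 < (n:ℝ)*u := by linarith
          have hlog1 : Real.log ((n:ℝ)*u) ≤ (n:ℝ)*u - 1 := Real.log_le_sub_one_of_pos hnu
          have hlog0 : 0 ≤ Real.log ((n:ℝ)*u) := Real.log_nonneg (le_of_lt hc)
          have hlog2 : Real.log (1-u) ≤ -u := by
            have := Real.log_le_sub_one_of_pos h1u; linarith
          have key2 : ((m:ℝ)-1) * Real.log ((n:ℝ)*u) + (m:ℝ)*((n:ℝ)-1) * Real.log (1-u) ≤ 0 := by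
            have hA : ((m:ℝ)-1) * Real.log ((n:ℝ)*u) ≤ ((m:ℝ)-1)*((n:ℝ)*u - 1) :=
              mul_le_mul_of_nonneg_left hlog1 (by
                have : (2:ℝ) ≤ m := by exact_mod_cast hm
                linarith)
            have hB : (m:ℝ)*((n:ℝ)-1) * Real.log (1-u) ≤ (m:ℝ)*((n:ℝ)-1) * (-u) :=
              mul_le_mul_of_nonneg_left hlog2 (by
                have h1 : (2:ℝ) ≤ m := by exact_mod_cast hm
                have h2 : (2:ℝ) ≤ n := by exact_mod_cast hn2
                nlinarith)
            have hC : 0 ≤ (m:ℝ) * (1 - u) := by positivity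
            nlinarith
          have hprod : ((n:ℝ)*u)^(m-1) * (1-u)^((n-1)*m) ≤ 1 := by
            have hc1 : ((m-1:ℕ):ℝ) = (m:ℝ)-1 := by
              push_cast [Nat.cast_sub (by omega : 1 ≤ m)]; ring
            have hc2 : (((n-1)*m:ℕ):ℝ) = ((n:ℝ)-1)*(m:ℝ) := by
              push_cast [Nat.cast_sub (by omega : 1 ≤ n)]; ring
            calc ((n:ℝ)*u)^(m-1) * (1-u)^((n-1)*m)
                = Real.exp (((m-1:ℕ):ℝ) * Real.log ((n:ℝ)*u))
                  * Real.exp ((((n-1)*m:ℕ):ℝ) * Real.log (1-u)) := by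
                  rw [← Real.log_pow, ← Real.log_pow, Real.exp_log (pow_pos hnu _),
                    Real.exp_log (pow_pos h1u _)]
              _ = Real.exp (((m-1:ℕ):ℝ) * Real.log ((n:ℝ)*u)
                  + (((n-1)*m:ℕ):ℝ) * Real.log (1-u)) := (Real.exp_add _ _).symm
              _ ≤ Real.exp 0 := by
                  apply Real.exp_le_exp.2
                  rw [hc1, hc2]
                  nlinarith [key2]
              _ = 1 := Real.exp_zero
          have hre : (n:ℝ)^m * u^(m-1) * ((1-u)^(n-1))^m
              = (n:ℝ) * (((n:ℝ)*u)^(m-1) * (1-u)^((n-1)*m)) := by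
            have h : (n:ℝ)^m = (n:ℝ) * (n:ℝ)^(m-1) := by
              conv_lhs => rw [show m = (m-1)+1 by omega]
              rw [pow_succ]; ring
            rw [h, mul_pow, ← pow_mul]
            ring
          rw [hre]
          calc (n:ℝ) * (((n:ℝ)*u)^(m-1) * (1-u)^((n-1)*m)) ≤ (n:ℝ) * 1 :=
                mul_le_mul_of_nonneg_left hprod (le_of_lt hn0)
            _ = n := mul_one _
    -- conclude
    have hr : ((n:ℝ)^((1:ℝ)/m))^m = (n:ℝ) := by
      rw [← Real.rpow_natCast ((n:ℝ)^((1:ℝ)/m)) m, ← Real.rpow_mul (le_of_lt hn0)]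
      rw [one_div, inv_mul_cancel₀ (by positivity : (m:ℝ) ≠ 0), Real.rpow_one]
    have hL0 : 0 ≤ (n:ℝ) * s^(m-1) * (1 - u)^(n-1) := by positivity
    exact (pow_le_pow_iff_left₀ hL0 (Real.rpow_nonneg (le_of_lt hn0) ((1:ℝ)/(m:ℝ)))
      (show m ≠ 0 by omega)).1 (le_of_le_of_eq key hr.symm)

lemma aux_eps (ε : ℝ) (hε0 : 0 < ε) (hε : 1 ≤ ε) : (1/ε + 2) ^ (ε - 1) ≤ (2:ℝ) ^ ε := by
  have hc : (0:ℝ) < 1/ε + 2 := by positivity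
  have hlogc : Real.log (1/ε+2) ≤ Real.log 2 + 1/(2*ε) := by
    have heq : (1/ε+2) = 2 * (1 + 1/(2*ε)) := by field_simp; ring
    rw [heq, Real.log_mul (by norm_num) (by positivity)]
    have := Real.log_le_sub_one_of_pos (show (0:ℝ) < 1 + 1/(2*ε) by positivity)
    linarith
  have hlog2 : (1:ℝ)/2 < Real.log 2 := by
    have := Real.log_two_gt_d9; linarith
  have hkey : (ε-1) * Real.log (1/ε+2) ≤ ε * Real.log 2 := by
    have h1 : (ε-1) * Real.log (1/ε+2) ≤ (ε-1) * (Real.log 2 + 1/(2*ε)) :=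
      mul_le_mul_of_nonneg_left hlogc (by linarith)
    have h2 : (ε-1)/(2*ε) ≤ 1/2 := by
      rw [div_le_div_iff₀ (by positivity) (by norm_num)]; linarith
    have h3 : (ε-1) * (1/(2*ε)) = (ε-1)/(2*ε) := by ring
    nlinarith [hlog2]
  calc (1/ε+2)^(ε-1) = Real.exp (Real.log (1/ε+2) * (ε-1)) := by
        rw [Real.rpow_def_of_pos hc]
    _ ≤ Real.exp (Real.log 2 * ε) := Real.exp_le_exp.2 (by linarith [hkey])
    _ = (2:ℝ)^ε := by rw [Real.rpow_def_of_pos (by norm_num : (0:ℝ)<2)]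

theorem counterexample_disk (ε : ℝ) (hε : 0 < ε) (n : ℕ) (hn : 1 ≤ n)
    (m : ℕ) (hme : Even m) (hm1 : 1/ε < (m:ℝ)) (hm2 : (m:ℝ) ≤ 1/ε + 2) :
    ∃ P : Polynomial ℂ, P.natDegree = m * n ∧ (∀ z : ℂ, P.IsRoot z → ‖z‖ = 1) ∧
      (⨆ x : Icc (-1:ℝ) 1, ‖(Polynomial.derivative P).eval ((x : ℝ) : ℂ)‖) ≤
        (1/ε + 2) ^ (1 - ε) * ((m * n : ℕ) : ℝ) ^ ε *
          ⨆ x : Icc (-1:ℝ) 1, ‖P.eval ((x : ℝ) : ℂ)‖ := by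
  haveI : Nonempty (Icc (-1:ℝ) 1) := ⟨⟨0, by constructor <;> norm_num⟩⟩
  haveI : CompactSpace (Icc (-1:ℝ) 1) := isCompact_iff_compactSpace.1 isCompact_Icc
  have bdd : ∀ Q : Polynomial ℂ,
      BddAbove (Set.range fun x : Icc (-1:ℝ) 1 => ‖Q.eval ((x:ℝ):ℂ)‖) := by
    intro Q
    have hc : Continuous fun x : Icc (-1:ℝ) 1 => ‖Q.eval ((x:ℝ):ℂ)‖ :=
      (Q.continuous.comp (Complex.continuous_ofReal.comp continuous_subtype_val)).norm
    exact (isCompact_range hc).bddAbove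
  have hm2' : 2 ≤ m := by
    have h1 : 0 < (m:ℝ) := lt_trans (by positivity) hm1
    have h2 : 0 < m := by exact_mod_cast h1
    obtain ⟨k, hk⟩ := hme
    omega
  have hmne : m ≠ 0 := by omega
  have hmR : (2:ℝ) ≤ m := by exact_mod_cast hm2'
  have hnR : (1:ℝ) ≤ n := by exact_mod_cast hn
  have hmn2 : 2 ≤ m*n := le_trans hm2' (Nat.le_mul_of_pos_right m (by omega))
  have hmnR : (2:ℝ) ≤ ((m*n:ℕ):ℝ) := by exact_mod_cast hmn2
  have hεinv : 1/(m:ℝ) ≤ ε := by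
    have h1 : 1 < (m:ℝ) * ε := by
      have := (div_lt_iff₀ hε).1 hm1; linarith
    rw [div_le_iff₀ (by positivity : (0:ℝ) < (m:ℝ))]
    linarith
  have hR0 : (0:ℝ) ≤ (1/ε + 2)^(1-ε) * ((m*n:ℕ):ℝ)^ε := by positivity
  have hnormone : ∀ z : ℂ, ‖z‖^m = 1 → ‖z‖ = 1 := by
    intro z hz
    rcases lt_trichotomy ‖z‖ 1 with h | h | h
    · exfalso
      have := pow_lt_one₀ (norm_nonneg z) h hmne
      linarith
    · exact h
    · exfalso
      have := one_lt_pow₀ h hmne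
      linarith
  rcases le_or_gt ε 1 with hcase | hcase
  · -- ε ≤ 1 : use P = (X^m - 1)^n
    refine ⟨((X:ℂ[X])^m - 1)^n, ?_, ?_, ?_⟩
    · rw [natDegree_pow]
      have h : ((X:ℂ[X])^m - 1).natDegree = m := by
        simpa using natDegree_X_pow_sub_C (n := m) (r := (1:ℂ))
      rw [h, Nat.mul_comm]
    · intro z hz
      have hz' : (z^m - 1)^n = 0 := by
        simpa [IsRoot, eval_pow] using hz
      have hzm : z^m = 1 := by
        have h0 := pow_eq_zero_iff (show n ≠ 0 by omega) |>.1 hz'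
        linear_combination h0
      apply hnormone
      rw [← norm_pow, hzm, norm_one]
    · -- the sup bound
      have hderiv : derivative (((X:ℂ[X])^m - 1)^n)
          = C ((n:ℂ)*(m:ℂ)) * (((X:ℂ[X])^m - 1)^(n-1) * X^(m-1)) := by
        rw [derivative_pow, derivative_sub, derivative_one, derivative_X_pow, C_mul]
        ring
      have hev : ∀ x : ℝ, |x| ≤ 1 → ‖(derivative (((X:ℂ[X])^m - 1)^n)).eval ((x:ℝ):ℂ)‖
          = (m:ℝ) * ((n:ℝ) * |x|^(m-1) * (1 - |x|^m)^(n-1)) := by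
        intro x hx1
        rw [hderiv]
        have hxm : (((x:ℝ):ℂ)^m - 1) = (((x^m - 1 : ℝ)):ℂ) := by push_cast; ring
        have hxabs : x^m = |x|^m := (Even.pow_abs hme x).symm
        have hxm1 : x^m ≤ 1 := by
          rw [hxabs]; exact pow_le_one₀ (abs_nonneg x) hx1
        have habs : |x^m - 1| = 1 - |x|^m := by
          rw [abs_of_nonpos (by linarith), hxabs]; ring
        simp only [eval_mul, eval_C, eval_pow, eval_sub, eval_one, eval_X, norm_mul, norm_pow,
          hxm, Complex.norm_real, Real.norm_eq_abs, Complex.norm_natCast, habs]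
        ring
      have hsup1 : (⨆ x : Icc (-1:ℝ) 1, ‖(derivative (((X:ℂ[X])^m - 1)^n)).eval ((x:ℝ):ℂ)‖)
          ≤ (m:ℝ) * (n:ℝ)^((1:ℝ)/m) := by
        apply ciSup_le
        intro x
        have hx1 : |(x:ℝ)| ≤ 1 := abs_le.2 ⟨x.2.1, x.2.2⟩
        rw [hev x hx1]
        exact mul_le_mul_of_nonneg_left
          (aux_core m n hm2' hn |(x:ℝ)| (abs_nonneg _) hx1) (by positivity)
      have hsup2 : 1 ≤ ⨆ x : Icc (-1:ℝ) 1, ‖(((X:ℂ[X])^m - 1)^n).eval ((x:ℝ):ℂ)‖ := by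
        have h0 : ‖(((X:ℂ[X])^m - 1)^n).eval (((0:ℝ):ℂ))‖ = 1 := by
          simp [eval_pow, zero_pow hmne]
        calc (1:ℝ) = ‖(((X:ℂ[X])^m - 1)^n).eval (((0:ℝ):ℂ))‖ := h0.symm
          _ ≤ _ := le_ciSup (bdd _) (⟨0, by constructor <;> norm_num⟩ : Icc (-1:ℝ) 1)
      have hfinal : (m:ℝ) * (n:ℝ)^((1:ℝ)/m) ≤ (1/ε+2)^(1-ε) * ((m*n:ℕ):ℝ)^ε := by
        have s1 : (n:ℝ)^((1:ℝ)/m) ≤ (n:ℝ)^ε := Real.rpow_le_rpow_of_exponent_le hnR hεinv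
        have s2 : (m:ℝ)^(1-ε) ≤ (1/ε+2)^(1-ε) :=
          Real.rpow_le_rpow (by positivity) hm2 (by linarith)
        have s3 : (m:ℝ) = (m:ℝ)^(1-ε) * (m:ℝ)^ε := by
          rw [← Real.rpow_add (by positivity : (0:ℝ) < (m:ℝ)), sub_add_cancel, Real.rpow_one]
        calc (m:ℝ) * (n:ℝ)^((1:ℝ)/m) ≤ (m:ℝ) * (n:ℝ)^ε :=
              mul_le_mul_of_nonneg_left s1 (by positivity)
          _ = (m:ℝ)^(1-ε) * ((m:ℝ)^ε * (n:ℝ)^ε) := by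
              conv_lhs => rw [s3]
              ring
          _ ≤ (1/ε+2)^(1-ε) * ((m:ℝ)^ε * (n:ℝ)^ε) :=
              mul_le_mul_of_nonneg_right s2 (by positivity)
          _ = (1/ε+2)^(1-ε) * ((m*n:ℕ):ℝ)^ε := by
              rw [← Real.mul_rpow (by positivity) (by positivity), Nat.cast_mul]
      calc (⨆ x : Icc (-1:ℝ) 1, ‖(derivative (((X:ℂ[X])^m - 1)^n)).eval ((x:ℝ):ℂ)‖)
          ≤ (m:ℝ) * (n:ℝ)^((1:ℝ)/m) := hsup1
        _ ≤ (1/ε+2)^(1-ε) * ((m*n:ℕ):ℝ)^ε := hfinal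
        _ = (1/ε+2)^(1-ε) * ((m*n:ℕ):ℝ)^ε * 1 := (mul_one _).symm
        _ ≤ _ := mul_le_mul_of_nonneg_left hsup2 hR0
  · -- 1 < ε : use P = (X^m + 1)^n
    have hε1 : 1 ≤ ε := le_of_lt hcase
    refine ⟨((X:ℂ[X])^m + 1)^n, ?_, ?_, ?_⟩
    · rw [natDegree_pow]
      have h : ((X:ℂ[X])^m + 1).natDegree = m := by
        simpa using natDegree_X_pow_add_C (n := m) (r := (1:ℂ))
      rw [h, Nat.mul_comm]
    · intro z hz
      have hz' : (z^m + 1)^n = 0 := by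
        simpa [IsRoot, eval_pow] using hz
      have hzm : z^m = -1 := by
        have h0 := pow_eq_zero_iff (show n ≠ 0 by omega) |>.1 hz'
        linear_combination h0
      apply hnormone
      rw [← norm_pow, hzm, norm_neg, norm_one]
    · have hderiv : derivative (((X:ℂ[X])^m + 1)^n)
          = C ((n:ℂ)*(m:ℂ)) * (((X:ℂ[X])^m + 1)^(n-1) * X^(m-1)) := by
        rw [derivative_pow, derivative_add, derivative_one, derivative_X_pow, C_mul]
        ring
      have hev : ∀ x : ℝ, |x| ≤ 1 → ‖(derivative (((X:ℂ[X])^m + 1)^n)).eval ((x:ℝ):ℂ)‖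
          = (m:ℝ) * ((n:ℝ) * |x|^(m-1) * (|x|^m + 1)^(n-1)) := by
        intro x hx1
        rw [hderiv]
        have hxm : (((x:ℝ):ℂ)^m + 1) = (((x^m + 1 : ℝ)):ℂ) := by push_cast; ring
        have hxabs : x^m = |x|^m := (Even.pow_abs hme x).symm
        have habs : |x^m + 1| = |x|^m + 1 := by
          rw [abs_of_nonneg (by rw [hxabs]; positivity), hxabs]
        simp only [eval_mul, eval_C, eval_pow, eval_add, eval_one, eval_X, norm_mul, norm_pow,
          hxm, Complex.norm_real, Real.norm_eq_abs, Complex.norm_natCast, habs]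
        ring
      have hsup1 : (⨆ x : Icc (-1:ℝ) 1, ‖(derivative (((X:ℂ[X])^m + 1)^n)).eval ((x:ℝ):ℂ)‖)
          ≤ (m:ℝ) * ((n:ℝ) * (2:ℝ)^(n-1)) := by
        apply ciSup_le
        intro x
        have hx1 : |(x:ℝ)| ≤ 1 := abs_le.2 ⟨x.2.1, x.2.2⟩
        rw [hev x hx1]
        have e1 : |(x:ℝ)|^(m-1) ≤ 1 := pow_le_one₀ (abs_nonneg _) hx1
        have e2 : (|(x:ℝ)|^m + 1)^(n-1) ≤ (2:ℝ)^(n-1) := by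
          apply pow_le_pow_left₀ (by positivity)
          have : |(x:ℝ)|^m ≤ 1 := pow_le_one₀ (abs_nonneg _) hx1
          linarith
        have : (n:ℝ) * |(x:ℝ)|^(m-1) * (|(x:ℝ)|^m + 1)^(n-1)
            ≤ (n:ℝ) * 1 * (2:ℝ)^(n-1) := by
          apply mul_le_mul (mul_le_mul_of_nonneg_left e1 (by positivity)) e2 (by positivity)
          positivity
        apply mul_le_mul_of_nonneg_left _ (by positivity : (0:ℝ) ≤ (m:ℝ))
        calc (n:ℝ) * |(x:ℝ)|^(m-1) * (|(x:ℝ)|^m + 1)^(n-1)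
            ≤ (n:ℝ) * 1 * (2:ℝ)^(n-1) := this
          _ = (n:ℝ) * (2:ℝ)^(n-1) := by ring
      have hsup2 : (2:ℝ)^n ≤ ⨆ x : Icc (-1:ℝ) 1, ‖(((X:ℂ[X])^m + 1)^n).eval ((x:ℝ):ℂ)‖ := by
        have h0 : ‖(((X:ℂ[X])^m + 1)^n).eval (((1:ℝ):ℂ))‖ = (2:ℝ)^n := by
          have h2 : (((1:ℝ):ℂ)^m + 1) = (2:ℂ) := by norm_num
          rw [eval_pow, eval_add, eval_pow, eval_X, eval_one, h2, norm_pow]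
          norm_num
        calc (2:ℝ)^n = ‖(((X:ℂ[X])^m + 1)^n).eval (((1:ℝ):ℂ))‖ := h0.symm
          _ ≤ _ := le_ciSup (bdd _) (⟨1, by constructor <;> norm_num⟩ : Icc (-1:ℝ) 1)
      have hfinal : (m:ℝ) * ((n:ℝ) * (2:ℝ)^(n-1))
          ≤ (1/ε+2)^(1-ε) * ((m*n:ℕ):ℝ)^ε * (2:ℝ)^n := by
        have hc0 : (0:ℝ) < 1/ε + 2 := by positivity
        have hcinv : (2:ℝ)^(-ε) ≤ (1/ε+2)^(1-ε) := by
          have h1 : (1/ε+2)^(1-ε) = ((1/ε+2)^(ε-1))⁻¹ := by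
            rw [← Real.rpow_neg (le_of_lt hc0), neg_sub]
          have h2 : (2:ℝ)^(-ε) = (((2:ℝ))^ε)⁻¹ := by
            rw [← Real.rpow_neg (by norm_num)]
          rw [h1, h2]
          exact inv_anti₀ (Real.rpow_pos_of_pos hc0 _) (aux_eps ε hε hε1)
        have e2 : (2:ℝ)^(ε-1) * ((m*n:ℕ):ℝ) ≤ ((m*n:ℕ):ℝ)^ε := by
          have h3 : ((m*n:ℕ):ℝ)^ε = ((m*n:ℕ):ℝ)^(ε-1) * ((m*n:ℕ):ℝ) := by
            conv_lhs => rw [show ε = (ε-1)+1 by ring]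
            rw [Real.rpow_add (by linarith : (0:ℝ) < ((m*n:ℕ):ℝ)), Real.rpow_one]
          rw [h3]
          exact mul_le_mul_of_nonneg_right
            (Real.rpow_le_rpow (by norm_num) hmnR (by linarith)) (by positivity)
        have epow : (2:ℝ)^(-ε) * (2:ℝ)^(ε-1) = 1/2 := by
          rw [← Real.rpow_add (by norm_num : (0:ℝ) < 2), show -ε + (ε-1) = -1 by ring,
            Real.rpow_neg_one]
          norm_num
        have e2n : (2:ℝ)^n = 2 * (2:ℝ)^(n-1) := by
          conv_lhs => rw [show n = (n-1)+1 by omega]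
          rw [pow_succ]; ring
        have hmain : ((2:ℝ)^(-ε) * ((2:ℝ)^(ε-1) * ((m*n:ℕ):ℝ)))
            ≤ (1/ε+2)^(1-ε) * ((m*n:ℕ):ℝ)^ε :=
          mul_le_mul hcinv e2 (by positivity) (by positivity)
        calc (m:ℝ) * ((n:ℝ) * (2:ℝ)^(n-1))
            = ((2:ℝ)^(-ε) * ((2:ℝ)^(ε-1) * ((m*n:ℕ):ℝ))) * (2:ℝ)^(n-1) * 2 := by
              push_cast
              rw [show ((2:ℝ)^(-ε) * ((2:ℝ)^(ε-1) * ((m:ℝ)*(n:ℝ)))) * (2:ℝ)^(n-1) * 2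
                = ((2:ℝ)^(-ε) * (2:ℝ)^(ε-1)) * ((m:ℝ)*(n:ℝ)) * ((2:ℝ)^(n-1) * 2) by ring,
                epow]
              ring
          _ ≤ ((1/ε+2)^(1-ε) * ((m*n:ℕ):ℝ)^ε) * (2:ℝ)^(n-1) * 2 := by
              have h4 : (0:ℝ) ≤ (2:ℝ)^(n-1) := by positivity
              apply mul_le_mul_of_nonneg_right (mul_le_mul_of_nonneg_right hmain h4)
              norm_num
          _ = (1/ε+2)^(1-ε) * ((m*n:ℕ):ℝ)^ε * (2:ℝ)^n := by
              rw [e2n]; ring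
      calc (⨆ x : Icc (-1:ℝ) 1, ‖(derivative (((X:ℂ[X])^m + 1)^n)).eval ((x:ℝ):ℂ)‖)
          ≤ (m:ℝ) * ((n:ℝ) * (2:ℝ)^(n-1)) := hsup1
        _ ≤ (1/ε+2)^(1-ε) * ((m*n:ℕ):ℝ)^ε * (2:ℝ)^n := hfinal
        _ ≤ _ := mul_le_mul_of_nonneg_left hsup2 hR0
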